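/- Let L_{e_1}, L_{e_2}, L_{e_3}, ... be an enumeration without repetition of the languages L_{e_i} = {1, 2, ..., 100} ∪ ℤ_{≥ e_i} (e_i ∈ ℤ), where ℤ_{≥ i} = {i, i+1, i+2, ...}, over the universe ℤ, and let t_1, t_2, t_3, ... be a sequence of finite integers, each at least 1. Then there exists a generating algorithm that non-uniformly generates from the collection (L_{e_1}, L_{e_2}, ...) with generation time at most t_i for every language L_{e_i} if and only if the sequence is admissible: for every t ∈ {1, 2, ..., 100}, there exists a finite n_t such that e_i ≤ n_t for every i with t_i ≤ t. -/

import Mathlib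

/-- The input prefix `x_1, ..., x_t` presented to the algorithm at time `t`
(universe `ℤ`). -/
def inputListZ (x : ℕ → ℤ) (t : ℕ) : List ℤ := (List.range t).map x

/-- `S_t`: the set of distinct strings among the first `t` inputs. -/
def SfinZ (x : ℕ → ℤ) (t : ℕ) : Finset ℤ := (inputListZ x t).toFinset

/-- `x` is an enumeration of the language `Lang ⊆ ℤ`. -/
def IsEnumOfZ (x : ℕ → ℤ) (Lang : Set ℤ) : Prop :=
  (∀ t, x t ∈ Lang) ∧ ∀ s ∈ Lang, ∃ t, x t = s

/-- Non-uniform generation from a collection of languages over `ℤ` indexed by `ℕ`. -/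
def NonUniformGenZN (G : List ℤ → ℤ) (L : ℕ → Set ℤ) (tG : ℕ → ℕ) : Prop :=
  ∀ i (x : ℕ → ℤ), IsEnumOfZ x (L i) → ∀ t, 1 ≤ t → tG i ≤ (SfinZ x t).card →
    G (inputListZ x t) ∈ L i \ ↑(SfinZ x t)

/-- The language `{1, ..., 100} ∪ ℤ_{≥ i}`. -/
def Lang10 (i : ℤ) : Set ℤ := {z : ℤ | (1 ≤ z ∧ z ≤ 100) ∨ i ≤ z}

lemma mem_SfinZ {x : ℕ → ℤ} {t : ℕ} {z : ℤ} : z ∈ SfinZ x t ↔ ∃ k < t, x k = z := by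
  simp [SfinZ, inputListZ]

lemma inputListZ_succ (x : ℕ → ℤ) (t : ℕ) :
    inputListZ x (t + 1) = inputListZ x t ++ [x t] := by
  simp [inputListZ, List.range_succ]

lemma inputListZ_congr {x y : ℕ → ℤ} {t : ℕ} (h : ∀ k < t, x k = y k) :
    inputListZ x t = inputListZ y t := by
  unfold inputListZ
  apply List.map_congr_left
  intro a ha
  exact h a (List.mem_range.mp ha)

lemma le_foldr_max_base (b : ℤ) (l : List ℤ) : b ≤ l.foldr max b := by
  induction l with
  | nil => simp
  | cons a l ih => exact le_trans ih (le_max_right _ _)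

lemma mem_le_foldr_max {a : ℤ} {l : List ℤ} (b : ℤ) (h : a ∈ l) : a ≤ l.foldr max b := by
  induction l with
  | nil => simp at h
  | cons c l ih =>
    rcases List.mem_cons.mp h with h | h
    · subst h; exact le_max_left _ _
    · exact le_trans (ih h) (le_max_right _ _)

/-- Finite list of the first `k` values of the canonical adversarial sequence. -/
def mkList (G : List ℤ → ℤ) (T : ℕ) : ℕ → List ℤ
  | 0 => []
  | (k + 1) => mkList G T k ++ [if k < T then ((k : ℤ) + 1) else G (mkList G T k)]

/-- The canonical adversarial sequence: `1, 2, ..., T`, then G's outputs fed back. -/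
def seqG (G : List ℤ → ℤ) (T : ℕ) (k : ℕ) : ℤ :=
  if k < T then ((k : ℤ) + 1) else G (mkList G T k)

lemma mkList_eq (G : List ℤ → ℤ) (T : ℕ) : ∀ k, mkList G T k = inputListZ (seqG G T) k := by
  intro k
  induction k with
  | zero => simp [mkList, inputListZ]
  | succ k ih =>
    rw [inputListZ_succ, mkList, ih]
    congr 1
    simp [seqG, ih]

lemma exists_enum_ext (L : Set ℤ) (c : ℤ) (hc : c ∈ L) (s : ℕ → ℤ) (m : ℕ)
    (hs : ∀ k < m, s k ∈ L) :
    ∃ x : ℕ → ℤ, (∀ k < m, x k = s k) ∧ IsEnumOfZ x L := by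
  classical
  refine ⟨fun k => if k < m then s k else
      (if Denumerable.ofNat ℤ (k - m) ∈ L then Denumerable.ofNat ℤ (k - m) else c),
      ?_, ?_, ?_⟩
  · intro k hk; simp [hk]
  · intro k
    by_cases hk : k < m
    · simpa [hk] using hs k hk
    · simp only [hk, if_false]
      split
      · assumption
      · exact hc
  · intro a ha
    refine ⟨m + Encodable.encode a, ?_⟩
    have h1 : ¬ m + Encodable.encode a < m := by omega
    have h2 : m + Encodable.encode a - m = Encodable.encode a := by omega
    simp only [h1, h2, ↓reduceIte, Denumerable.ofNat_encode, ha]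

/-- from the proof of Proposition 3.8. Let `L_{e_1}, L_{e_2}, ...`
be an enumeration without repetition of the languages `{1,...,100} ∪ ℤ_{≥ e_i}`
(`e : ℕ → ℤ` bijective), and `t_1, t_2, ...` candidate generation times, each at least
`1`. There exists an algorithm non-uniformly generating from the collection with
generation time at most `t_i` for every `L_{e_i}` iff the sequence is admissible:
for every `T ∈ {1, ..., 100}` there is a finite `n_T` with `e_i ≤ n_T` whenever
`t_i ≤ T`. -/
theorem stmt_10 (e : ℕ → ℤ) (he : Function.Bijective e)
    (t : ℕ → ℕ) (ht : ∀ i, 1 ≤ t i) :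
    (∃ (G : List ℤ → ℤ) (tG : ℕ → ℕ),
        NonUniformGenZN G (fun i => Lang10 (e i)) tG ∧ ∀ i, tG i ≤ t i) ↔
      ∀ T : ℕ, 1 ≤ T → T ≤ 100 → ∃ n : ℤ, ∀ i, t i ≤ T → e i ≤ n := by
  constructor
  · rintro ⟨G, tG, hG, hle⟩ T hT1 hT100
    set s := seqG G T with hs_def
    have hIccne : (Finset.Icc T (T + 100)).Nonempty := ⟨T, by simp⟩
    set F := (Finset.Icc T (T + 100)).image s with hF_def
    have hFne : F.Nonempty := hIccne.image s
    refine ⟨F.max' hFne, ?_⟩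
    intro i hti
    have htG : tG i ≤ T := le_trans (hle i) hti
    have h1L : (1 : ℤ) ∈ Lang10 (e i) := Or.inl ⟨le_refl _, by norm_num⟩
    -- Main invariant
    have key : ∀ m, s m ∈ Lang10 (e i) ∧ (T ≤ m → s m ∉ SfinZ s m) := by
      intro m
      induction m using Nat.strong_induction_on with
      | _ m ih =>
        by_cases hm : m < T
        · constructor
          · left
            have hsm : s m = (m : ℤ) + 1 := by simp [hs_def, seqG, hm]
            rw [hsm]
            constructor
            · omega
            · have : (m : ℤ) + 1 ≤ (T : ℤ) := by exact_mod_cast hm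
              have : (T : ℤ) ≤ 100 := by exact_mod_cast hT100
              omega
          · intro h; omega
        · push_neg at hm
          obtain ⟨x, hx, henum⟩ := exists_enum_ext (Lang10 (e i)) 1 h1L s m
            (fun k hk => (ih k hk).1)
          have hil : inputListZ x m = inputListZ s m := inputListZ_congr hx
          have hS : SfinZ x m = SfinZ s m := by unfold SfinZ; rw [hil]
          have hcard : tG i ≤ (SfinZ x m).card := by
            have hsub : (Finset.Icc (1 : ℤ) (T : ℤ)) ⊆ SfinZ x m := by
              intro z hz
              rw [Finset.mem_Icc] at hz
              rw [mem_SfinZ]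
              refine ⟨z.toNat - 1, by omega, ?_⟩
              have hk : z.toNat - 1 < T := by omega
              have hk2 : z.toNat - 1 < m := lt_of_lt_of_le hk hm
              rw [hx _ hk2]
              have : s (z.toNat - 1) = ((z.toNat - 1 : ℕ) : ℤ) + 1 := by
                simp [hs_def, seqG, hk]
              rw [this]
              omega
            have hc := Finset.card_le_card hsub
            have : (Finset.Icc (1 : ℤ) (T : ℤ)).card = T := by
              rw [Int.card_Icc]
              omega
            omega
          have hout := hG i x henum m (le_trans hT1 hm) hcard
          rw [hil, hS] at hout
          have hsm : s m = G (inputListZ s m) := by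
            have : ¬ m < T := by omega
            simp [hs_def, seqG, this, mkList_eq]
          rw [← hsm] at hout
          exact ⟨hout.1, fun _ => hout.2⟩
    -- injectivity on the window
    have hinj : Set.InjOn s (Finset.Icc T (T + 100)) := by
      have hne : ∀ a b : ℕ, T ≤ b → a < b → s a ≠ s b := by
        intro a b hTb hab heq
        have : s b ∈ SfinZ s b := mem_SfinZ.mpr ⟨a, hab, heq⟩
        exact (key b).2 hTb this
      intro a ha b hb hab
      simp only [Finset.coe_Icc, Set.mem_Icc] at ha hb
      rcases lt_trichotomy a b with h | h | h
      · exact absurd hab (hne a b hb.1 h)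
      · exact h
      · exact absurd hab.symm (hne b a ha.1 h)
    have hcardF : F.card = 101 := by
      rw [hF_def, Finset.card_image_of_injOn hinj, Nat.card_Icc]
      omega
    have hex : ∃ z ∈ F, z ∉ Finset.Icc (1 : ℤ) 100 := by
      by_contra hcon
      push_neg at hcon
      have hsub : F ⊆ Finset.Icc (1 : ℤ) 100 := hcon
      have := Finset.card_le_card hsub
      rw [hcardF, Int.card_Icc] at this
      omega
    obtain ⟨z, hzF, hznot⟩ := hex
    rw [Finset.mem_Icc] at hznot
    obtain ⟨m, hm, hmz⟩ := Finset.mem_image.mp hzF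
    have hzL : z ∈ Lang10 (e i) := hmz ▸ (key m).1
    have hez : e i ≤ z := by
      rcases hzL with h | h
      · exact absurd h hznot
      · exact h
    exact le_trans hez (F.le_max' z hzF)
  · intro h
    obtain ⟨N, hN⟩ := h 100 (by norm_num) (le_refl _)
    refine ⟨fun l => l.foldr max (max 100 N) + 1, t, ?_, fun i => le_refl _⟩
    intro i x henum t' ht' hcard
    set l := inputListZ x t' with hl_def
    set M := l.foldr max (max 100 N) with hM_def
    have hmemS : ∀ z ∈ SfinZ x t', z ≤ M := by
      intro z hz
      exact mem_le_foldr_max _ (List.mem_toFinset.mp hz)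
    constructor
    · -- membership in Lang10 (e i)
      right
      show e i ≤ M + 1
      by_cases hti : t i ≤ 100
      · have := hN i hti
        have h1 : N ≤ max 100 N := le_max_right _ _
        have h2 : (max 100 N : ℤ) ≤ M := le_foldr_max_base _ _
        omega
      · push_neg at hti
        have hex : ∃ z ∈ SfinZ x t', z ∉ Finset.Icc (1 : ℤ) 100 := by
          by_contra hcon
          push_neg at hcon
          have hsub : SfinZ x t' ⊆ Finset.Icc (1 : ℤ) 100 := hcon
          have hc := Finset.card_le_card hsub
          rw [Int.card_Icc] at hc
          omega
        obtain ⟨z, hzS, hznot⟩ := hex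
        rw [Finset.mem_Icc] at hznot
        obtain ⟨k, _, hk⟩ := mem_SfinZ.mp hzS
        have hzL : z ∈ Lang10 (e i) := hk ▸ henum.1 k
        have hez : e i ≤ z := by
          rcases hzL with h' | h'
          · exact absurd h' hznot
          · exact h'
        have := hmemS z hzS
        omega
    · -- not in S
      intro hmem
      have hmem' : M + 1 ∈ SfinZ x t' := hmem
      have := hmemS _ hmem'
      omega
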